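/- (Conditional entropy of new subfiles) If the subfiles {W̄_S : S ⊆ [N], S ≠ ∅} are mutually independent with H(W̄_S) = n·R_{|S|}, then for distinct d_1, ..., d_k, H(W_{d_k} | W_{d_1}, ..., W_{d_{k-1}}) = n·Σ_{ℓ=0}^{N-k} C(N-k, ℓ)·R_{ℓ+1}, where W_i = (W̄_S : i ∈ S). -/

import Mathlib

open Finset
open scoped Classical

/-- Probability of an event on a finite sample space with pmf `p`. -/
noncomputable def prEvent {Ω : Type*} [Fintype Ω] (p : Ω → ℝ) (E : Ω → Prop)
    [DecidablePred E] : ℝ :=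
  ∑ ω ∈ Finset.univ.filter E, p ω

/-- Shannon entropy (in bits) of a finitely-valued random variable. -/
noncomputable def shannonH {Ω α : Type*} [Fintype Ω] [Fintype α] [DecidableEq α]
    (p : Ω → ℝ) (X : Ω → α) : ℝ :=
  ∑ a : α, -(prEvent p (fun ω => X ω = a) * Real.logb 2 (prEvent p (fun ω => X ω = a)))

/-- The file `W_i`: the tuple of all subfiles `W̄_S` with `i ∈ S ⊆ [N]`
(padded with `default` on subsets not containing `i`). -/
def fileRV {Ω β : Type*} [Inhabited β] (N : ℕ) (Wbar : Finset ℕ → Ω → β) (i : ℕ) :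
    Ω → ({S : Finset ℕ // S ∈ (Finset.Icc 1 N).powerset} → β) :=
  fun ω S => if i ∈ S.val then Wbar S.val ω else default

section Lemmas
variable {Ω : Type*} [Fintype Ω] {p : Ω → ℝ}

lemma prEvent_congr {E E' : Ω → Prop} [DecidablePred E] [DecidablePred E']
    (h : ∀ ω, E ω ↔ E' ω) : prEvent p E = prEvent p E' := by
  unfold prEvent
  apply Finset.sum_congr _ (fun _ _ => rfl)
  ext ω
  simp [h ω]

lemma prEvent_nonneg (hp0 : ∀ ω, 0 ≤ p ω) (E : Ω → Prop) [DecidablePred E] :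
    0 ≤ prEvent p E :=
  Finset.sum_nonneg fun ω _ => hp0 ω

lemma prEvent_partition (E : Ω → Prop) [DecidablePred E] {γ : Type*} [Fintype γ]
    [DecidableEq γ] (φ : Ω → γ) :
    prEvent p E = ∑ c : γ, prEvent p (fun ω => E ω ∧ φ ω = c) := by
  unfold prEvent
  have : ∀ c : γ, ∑ ω ∈ Finset.univ.filter (fun ω => E ω ∧ φ ω = c), p ω
      = ∑ ω ∈ Finset.univ.filter E, (if φ ω = c then p ω else 0) := by
    intro c
    rw [Finset.sum_filter, Finset.sum_filter]
    exact Finset.sum_congr rfl fun ω _ => by by_cases h1 : E ω <;> simp [h1]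
  simp only [this]
  rw [Finset.sum_comm]
  exact (Finset.sum_congr rfl fun ω _ => by simp).symm

lemma sum_prEvent_eq_one (hp1 : ∑ ω : Ω, p ω = 1) {α : Type*} [Fintype α]
    [DecidableEq α] (X : Ω → α) :
    ∑ a : α, prEvent p (fun ω => X ω = a) = 1 := by
  have h := prEvent_partition (p := p) (fun _ : Ω => True) X
  have h2 : prEvent p (fun _ : Ω => True) = 1 := by
    unfold prEvent; rw [Finset.filter_true]; exact hp1
  rw [h2] at h
  rw [show (∑ a : α, prEvent p fun ω => X ω = a)
      = ∑ a : α, prEvent p fun ω => True ∧ X ω = a from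
    Finset.sum_congr rfl fun a _ => prEvent_congr fun ω => by simp]
  exact h.symm

lemma shannonH_comp_injective {α γ : Type*} [Fintype α] [DecidableEq α]
    [Fintype γ] [DecidableEq γ] (X : Ω → α) (F : α → γ) (hF : Function.Injective F) :
    shannonH p (fun ω => F (X ω)) = shannonH p X := by
  unfold shannonH
  have hvan : ∀ c ∈ (Finset.univ : Finset γ), c ∉ (Finset.univ : Finset α).image F →
      -(prEvent p (fun ω => F (X ω) = c) * Real.logb 2 (prEvent p (fun ω => F (X ω) = c)))
        = 0 := by
    intro c _ hc
    have hz : prEvent p (fun ω => F (X ω) = c) = 0 := by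
      unfold prEvent
      rw [Finset.filter_false_of_mem
        (fun ω _ h => hc (Finset.mem_image.2 ⟨X ω, Finset.mem_univ _, h⟩)),
        Finset.sum_empty]
    rw [hz]
    simp
  rw [← Finset.sum_subset (Finset.subset_univ _) hvan,
      Finset.sum_image (fun x _ y _ h => hF h)]
  exact Finset.sum_congr rfl fun a _ => by
    rw [prEvent_congr (p := p) (E := fun ω => F (X ω) = F a) (E' := fun ω => X ω = a)
      (fun ω => hF.eq_iff)]

lemma entropy_indep {β ι : Type*} [Fintype β] [DecidableEq β]
    [Fintype ι] [DecidableEq ι]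
    (hp0 : ∀ ω, 0 ≤ p ω) (hp1 : ∑ ω : Ω, p ω = 1)
    (W : ι → Ω → β)
    (hind : ∀ g : ι → β,
      prEvent p (fun ω => ∀ i, W i ω = g i)
        = ∏ i, prEvent p (fun ω => W i ω = g i)) :
    shannonH p (fun ω => fun i => W i ω) = ∑ i, shannonH p (W i) := by
  set q : ι → β → ℝ := fun i a => prEvent p (fun ω => W i ω = a) with hq
  have hq0 : ∀ i a, 0 ≤ q i a := fun i a => prEvent_nonneg hp0 _
  have hq1 : ∀ i, ∑ a : β, q i a = 1 := fun i => sum_prEvent_eq_one hp1 (W i)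
  have hP : ∀ g : ι → β, prEvent p (fun ω => (fun i => W i ω) = g) = ∏ i, q i (g i) := by
    intro g
    rw [← hind g]
    exact prEvent_congr fun ω => funext_iff
  have key : ∀ g : ι → β,
      -((∏ i, q i (g i)) * Real.logb 2 (∏ i, q i (g i)))
        = ∑ i, -((∏ j, q j (g j)) * Real.logb 2 (q i (g i))) := by
    intro g
    by_cases hz : ∃ i, q i (g i) = 0
    · obtain ⟨i, hi⟩ := hz
      have h0 : (∏ j, q j (g j)) = 0 := Finset.prod_eq_zero (Finset.mem_univ i) hi
      simp [h0]
    · push_neg at hz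
      rw [Real.logb_prod _ _ (fun i _ => hz i), Finset.mul_sum, ← Finset.sum_neg_distrib]
  unfold shannonH
  calc (∑ g : ι → β, -(prEvent p (fun ω => (fun i => W i ω) = g)
          * Real.logb 2 (prEvent p (fun ω => (fun i => W i ω) = g))))
      = ∑ g : ι → β, ∑ i, -((∏ j, q j (g j)) * Real.logb 2 (q i (g i))) := by
        refine Finset.sum_congr rfl fun g _ => ?_
        rw [hP g]
        exact key g
    _ = ∑ i, ∑ g : ι → β, -((∏ j, q j (g j)) * Real.logb 2 (q i (g i))) :=
        Finset.sum_comm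
    _ = ∑ i, ∑ a : β, -(q i a * Real.logb 2 (q i a)) := by
        refine Finset.sum_congr rfl fun i _ => ?_
        set h : ι → β → ℝ := fun j a => if j = i then q i a * Real.logb 2 (q i a) else q j a
          with hh
        have hprod : ∀ g : ι → β,
            (∏ j, q j (g j)) * Real.logb 2 (q i (g i)) = ∏ j, h j (g j) := by
          intro g
          rw [← Finset.prod_erase_mul Finset.univ _ (Finset.mem_univ i),
              ← Finset.prod_erase_mul Finset.univ (fun j => h j (g j)) (Finset.mem_univ i)]
          have h1 : ∀ j ∈ Finset.univ.erase i, h j (g j) = q j (g j) := by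
            intro j hj
            simp [hh, Finset.ne_of_mem_erase hj]
          rw [Finset.prod_congr rfl h1]
          simp [hh, mul_assoc]
        simp only [hprod]
        rw [Finset.sum_neg_distrib, Finset.sum_neg_distrib]
        congr 1
        have hpi : ∑ g : ι → β, ∏ j, h j (g j)
            = ∏ j, ∑ a : β, h j a := by
          rw [Finset.prod_univ_sum (fun _ => Finset.univ) h]
          rw [Fintype.piFinset_univ]
        rw [hpi, ← Finset.prod_erase_mul Finset.univ _ (Finset.mem_univ i)]
        have h2 : ∀ j ∈ Finset.univ.erase i, (∑ a : β, h j a) = 1 := by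
          intro j hj
          have : ∀ a : β, h j a = q j a := fun a => by
            simp [hh, Finset.ne_of_mem_erase hj]
          simp only [this]
          exact hq1 j
        rw [Finset.prod_congr rfl h2, Finset.prod_const_one, one_mul]
        simp [hh]

lemma marginal {β τ : Type*} [Fintype β] [DecidableEq β] [DecidableEq τ]
    (hp1 : ∑ ω : Ω, p ω = 1)
    (W : τ → Ω → β) (𝒮 : Finset τ)
    (hindep : ∀ g : τ → β,
      prEvent p (fun ω => ∀ S ∈ 𝒮, W S ω = g S)
        = ∏ S ∈ 𝒮, prEvent p (fun ω => W S ω = g S))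
    (𝒜 : Finset τ) (h𝒜 : 𝒜 ⊆ 𝒮) (g : τ → β) :
    prEvent p (fun ω => ∀ S ∈ 𝒜, W S ω = g S)
      = ∏ S ∈ 𝒜, prEvent p (fun ω => W S ω = g S) := by
  set ℬ := 𝒮 \ 𝒜 with hℬ
  set q : τ → β → ℝ := fun S a => prEvent p (fun ω => W S ω = a) with hq
  rw [prEvent_partition (p := p) _ (fun ω => fun S : {S // S ∈ ℬ} => W S.1 ω)]
  have hterm : ∀ c : {S // S ∈ ℬ} → β,
      prEvent p (fun ω => (∀ S ∈ 𝒜, W S ω = g S)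
          ∧ (fun S : {S // S ∈ ℬ} => W S.1 ω) = c)
        = (∏ x ∈ ℬ.attach, q x.1 (c x)) * ∏ S ∈ 𝒜, q S (g S) := by
    intro c
    set comb : τ → β :=
      fun S => if h : S ∈ 𝒜 then g S else if h : S ∈ ℬ then c ⟨S, h⟩ else g S with hcomb
    have hiff : ∀ ω, ((∀ S ∈ 𝒜, W S ω = g S) ∧ (fun S : {S // S ∈ ℬ} => W S.1 ω) = c)
        ↔ (∀ S ∈ 𝒮, W S ω = comb S) := by
      intro ω
      constructor
      · rintro ⟨h1, h2⟩ S hS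
        by_cases hA : S ∈ 𝒜
        · rw [hcomb]
          simp only [dif_pos hA]
          exact h1 S hA
        · have hB : S ∈ ℬ := Finset.mem_sdiff.2 ⟨hS, hA⟩
          rw [hcomb]
          simp only [dif_neg hA, dif_pos hB]
          exact congrFun h2 ⟨S, hB⟩
      · intro h
        constructor
        · intro S hS
          have h3 := h S (h𝒜 hS)
          rw [hcomb] at h3
          simp only [dif_pos hS] at h3
          exact h3
        · funext x
          have hBS : x.1 ∈ 𝒮 := (Finset.mem_sdiff.1 x.2).1
          have hA : x.1 ∉ 𝒜 := (Finset.mem_sdiff.1 x.2).2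
          have h3 := h x.1 hBS
          rw [hcomb] at h3
          simp only [dif_neg hA, dif_pos x.2] at h3
          exact h3
    rw [prEvent_congr hiff, hindep comb, ← Finset.prod_sdiff h𝒜]
    congr 1
    · rw [← Finset.prod_attach ℬ (fun S => q S (comb S))]
      refine Finset.prod_congr rfl fun x _ => ?_
      have hA : x.1 ∉ 𝒜 := (Finset.mem_sdiff.1 x.2).2
      rw [hcomb]
      simp only [dif_neg hA, dif_pos x.2]
    · refine Finset.prod_congr rfl fun S hS => ?_
      rw [hcomb]
      simp only [dif_pos hS]
      rfl
  simp only [hterm]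
  rw [← Finset.sum_mul]
  have h1 : (∑ c : {S // S ∈ ℬ} → β, ∏ x ∈ ℬ.attach, q x.1 (c x)) = 1 := by
    rw [← Finset.univ_eq_attach]
    calc ∑ c : {S // S ∈ ℬ} → β, ∏ x : {S // S ∈ ℬ}, q x.1 (c x)
        = ∑ c ∈ Fintype.piFinset (fun _ : {S // S ∈ ℬ} => (Finset.univ : Finset β)),
            ∏ x : {S // S ∈ ℬ}, q x.1 (c x) := by rw [Fintype.piFinset_univ]
      _ = ∏ x : {S // S ∈ ℬ}, ∑ a : β, q x.1 a := (Finset.prod_univ_sum _ _).symm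
      _ = 1 := by
          simp only [show ∀ x : {S // S ∈ ℬ}, (∑ a : β, q x.1 a) = 1 from
            fun x => sum_prEvent_eq_one hp1 (W x.1)]
          exact Finset.prod_const_one
  rw [h1, one_mul]

set_option maxHeartbeats 2000000 in
lemma fileH {β : Type*} [Fintype β] [DecidableEq β] [Inhabited β]
    (N : ℕ) (hp0 : ∀ ω, 0 ≤ p ω) (hp1 : ∑ ω : Ω, p ω = 1)
    (Wbar : Finset ℕ → Ω → β)
    (hindep : ∀ g : Finset ℕ → β,
      prEvent p (fun ω => ∀ S ∈ (Finset.Icc 1 N).powerset.filter (fun S => S.Nonempty),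
          Wbar S ω = g S)
        = ∏ S ∈ (Finset.Icc 1 N).powerset.filter (fun S => S.Nonempty),
            prEvent p (fun ω => Wbar S ω = g S))
    (m : ℕ) (e : Fin m → ℕ) :
    shannonH p (fun ω => fun j : Fin m => fileRV N Wbar (e j) ω)
      = ∑ S ∈ ((Finset.Icc 1 N).powerset.filter (fun S => S.Nonempty)).filter
          (fun S => ∃ j, e j ∈ S), shannonH p (Wbar S) := by
  set 𝒮 := (Finset.Icc 1 N).powerset.filter (fun S => S.Nonempty) with h𝒮
  set A := 𝒮.filter (fun S => ∃ j, e j ∈ S) with hA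
  have hAsub : A ⊆ 𝒮 := Finset.filter_subset _ _
  have hSA : ∀ (j : Fin m) (S : Finset ℕ), S ∈ (Finset.Icc 1 N).powerset → e j ∈ S → S ∈ A :=
    fun j S hS hj => Finset.mem_filter.2 ⟨Finset.mem_filter.2 ⟨hS, ⟨e j, hj⟩⟩, ⟨j, hj⟩⟩
  set F : ({S // S ∈ A} → β) → (Fin m → {S : Finset ℕ // S ∈ (Finset.Icc 1 N).powerset} → β) :=
    fun f j S' => if h : e j ∈ S'.val then f ⟨S'.val, hSA j S'.val S'.2 h⟩ else default with hF
  have hcomp : (fun ω => fun j : Fin m => fileRV N Wbar (e j) ω)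
      = fun ω => F (fun S : {S // S ∈ A} => Wbar S.1 ω) := by
    funext ω j S'
    by_cases h : e j ∈ S'.val
    · simp [fileRV, hF, h]
    · simp [fileRV, hF, h]
  have hFinj : Function.Injective F := by
    intro f f' hff
    funext x
    obtain ⟨hx𝒮, j, hj⟩ := Finset.mem_filter.1 x.2
    have hpow : x.1 ∈ (Finset.Icc 1 N).powerset := (Finset.mem_filter.1 hx𝒮).1
    have h3 := congrFun (congrFun hff j) ⟨x.1, hpow⟩
    simp only [hF, dif_pos hj] at h3
    exact h3
  have hind : ∀ g : {S // S ∈ A} → β,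
      prEvent p (fun ω => ∀ x : {S // S ∈ A}, Wbar x.1 ω = g x)
        = ∏ x : {S // S ∈ A}, prEvent p (fun ω => Wbar x.1 ω = g x) := by
    intro g
    set g' : Finset ℕ → β := fun S => if h : S ∈ A then g ⟨S, h⟩ else default with hg'
    have hiff : ∀ ω, (∀ x : {S // S ∈ A}, Wbar x.1 ω = g x)
        ↔ (∀ S ∈ A, Wbar S ω = g' S) := by
      intro ω
      constructor
      · intro h S hS
        rw [hg']
        simp only [dif_pos hS]
        exact h ⟨S, hS⟩
      · intro h x
        have h3 := h x.1 x.2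
        rw [hg'] at h3
        simp only [dif_pos x.2] at h3
        exact h3
    rw [prEvent_congr hiff, marginal hp1 Wbar 𝒮 hindep A hAsub g']
    rw [← Finset.prod_attach A (fun S => prEvent p (fun ω => Wbar S ω = g' S)),
      ← Finset.univ_eq_attach]
    refine Finset.prod_congr rfl fun x _ => ?_
    have h4 : g' x.1 = g x := by
      rw [hg']
      simp only [dif_pos x.2]
    rw [h4]
  have step1 : shannonH p (fun ω => F (fun S : {S // S ∈ A} => Wbar S.1 ω))
      = shannonH p (fun ω => fun x : {S // S ∈ A} => Wbar x.1 ω) :=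
    shannonH_comp_injective (fun ω => fun S : {S // S ∈ A} => Wbar S.1 ω) F hFinj
  have step2 : shannonH p (fun ω => fun x : {S // S ∈ A} => Wbar x.1 ω)
      = ∑ x : {S // S ∈ A}, shannonH p (Wbar x.1) :=
    entropy_indep hp0 hp1 (fun x : {S // S ∈ A} => Wbar x.1) hind
  have step3 : (∑ x : {S // S ∈ A}, shannonH p (Wbar x.1))
      = ∑ S ∈ A, shannonH p (Wbar S) :=
    Finset.sum_coe_sort A (fun S => shannonH p (Wbar S))
  rw [hcomp]
  exact step1.trans (step2.trans step3)

end Lemmas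

set_option maxHeartbeats 1000000 in
/-- Conditional entropy of new subfiles: with mutually independent subfiles
`W̄_S` of entropy `n·R_{|S|}`, for distinct demands `d_1,…,d_k`,
`H(W_{d_k} | W_{d_1},…,W_{d_{k-1}}) = n·Σ_{ℓ=0}^{N-k} C(N-k,ℓ)·R_{ℓ+1}`. -/
theorem stmt6 {Ω β : Type*} [Fintype Ω] [Fintype β] [DecidableEq β] [Inhabited β]
    (N n k : ℕ) (hN : 1 ≤ N) (hk : 1 ≤ k) (hkN : k ≤ N)
    (R : ℕ → ℝ) (p : Ω → ℝ)
    (hp0 : ∀ ω, 0 ≤ p ω) (hp1 : ∑ ω : Ω, p ω = 1)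
    (Wbar : Finset ℕ → Ω → β)
    (hindep : ∀ g : Finset ℕ → β,
      prEvent p (fun ω => ∀ S ∈ (Finset.Icc 1 N).powerset.filter (fun S => S.Nonempty),
          Wbar S ω = g S)
        = ∏ S ∈ (Finset.Icc 1 N).powerset.filter (fun S => S.Nonempty),
            prEvent p (fun ω => Wbar S ω = g S))
    (hent : ∀ S ∈ (Finset.Icc 1 N).powerset.filter (fun S => S.Nonempty),
      shannonH p (Wbar S) = (n : ℝ) * R S.card)
    (d : Fin k → ℕ) (hd : Function.Injective d)
    (hdmem : ∀ i, d i ∈ Finset.Icc 1 N) :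
    shannonH p (fun ω => fun j : Fin k => fileRV N Wbar (d j) ω)
      - shannonH p (fun ω => fun j : Fin (k-1) =>
          fileRV N Wbar (d (Fin.castLE (Nat.sub_le k 1) j)) ω)
      = (n : ℝ) * ∑ ℓ ∈ Finset.range (N - k + 1),
          (Nat.choose (N - k) ℓ : ℝ) * R (ℓ + 1) := by
  have h1 : shannonH p (fun ω => fun j : Fin k => fileRV N Wbar (d j) ω)
      = ∑ S ∈ ((Finset.Icc 1 N).powerset.filter (fun S => S.Nonempty)).filter
          (fun S => ∃ j : Fin k, d j ∈ S), shannonH p (Wbar S) :=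
    fileH N hp0 hp1 Wbar hindep k d
  have h2 : shannonH p (fun ω => fun j : Fin (k-1) =>
          fileRV N Wbar (d (Fin.castLE (Nat.sub_le k 1) j)) ω)
      = ∑ S ∈ ((Finset.Icc 1 N).powerset.filter (fun S => S.Nonempty)).filter
          (fun S => ∃ j : Fin (k-1), d (Fin.castLE (Nat.sub_le k 1) j) ∈ S),
          shannonH p (Wbar S) :=
    fileH N hp0 hp1 Wbar hindep (k-1) (fun j => d (Fin.castLE (Nat.sub_le k 1) j))
  rw [h1, h2]
  set 𝒮 := (Finset.Icc 1 N).powerset.filter (fun S => S.Nonempty) with h𝒮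
  set A := 𝒮.filter (fun S => ∃ j : Fin k, d j ∈ S) with hA
  set B := 𝒮.filter (fun S => ∃ j : Fin (k-1), d (Fin.castLE (Nat.sub_le k 1) j) ∈ S) with hB
  have hBA : B ⊆ A := by
    intro S hS
    rw [hB, Finset.mem_filter] at hS
    obtain ⟨hS1, j, hj⟩ := hS
    exact Finset.mem_filter.2 ⟨hS1, ⟨Fin.castLE (Nat.sub_le k 1) j, hj⟩⟩
  rw [← Finset.sum_sdiff hBA, add_sub_cancel_right]
  set klast : Fin k := ⟨k - 1, by omega⟩ with hklast
  have hmem : ∀ S, S ∈ A \ B ↔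
      (S ⊆ Finset.Icc 1 N ∧ d klast ∈ S ∧ ∀ j : Fin k, j ≠ klast → d j ∉ S) := by
    intro S
    constructor
    · intro hS
      have hSA := (Finset.mem_sdiff.1 hS).1
      have hSB := (Finset.mem_sdiff.1 hS).2
      obtain ⟨hS𝒮, j0, hj0⟩ := Finset.mem_filter.1 hSA
      have hnotB : ∀ j : Fin (k-1), d (Fin.castLE (Nat.sub_le k 1) j) ∉ S := by
        intro j hj
        exact hSB (Finset.mem_filter.2 ⟨hS𝒮, ⟨j, hj⟩⟩)
      have hne : ∀ j : Fin k, j ≠ klast → d j ∉ S := by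
        intro j hj
        have hjlt : (j : ℕ) < k - 1 := by
          have h1 : (j : ℕ) < k := j.2
          have h2 : (j : ℕ) ≠ k - 1 := fun h => hj (Fin.ext h)
          omega
        have h3 := hnotB ⟨(j : ℕ), hjlt⟩
        have heq : Fin.castLE (Nat.sub_le k 1) (⟨(j : ℕ), hjlt⟩ : Fin (k-1)) = j :=
          Fin.ext rfl
        rwa [heq] at h3
      have hklmem : d klast ∈ S := by
        by_cases hc : j0 = klast
        · rwa [hc] at hj0
        · exact absurd hj0 (hne j0 hc)
      exact ⟨Finset.mem_powerset.1 (Finset.mem_filter.1 hS𝒮).1, hklmem, hne⟩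
    · rintro ⟨hsub, hkl, hne⟩
      refine Finset.mem_sdiff.2 ⟨Finset.mem_filter.2
        ⟨Finset.mem_filter.2 ⟨Finset.mem_powerset.2 hsub, ⟨d klast, hkl⟩⟩,
          ⟨klast, hkl⟩⟩, ?_⟩
      intro hSB
      obtain ⟨-, j, hj⟩ := Finset.mem_filter.1 hSB
      have hne' : Fin.castLE (Nat.sub_le k 1) j ≠ klast := by
        intro h
        have h2 := congrArg (fun x : Fin k => (x : ℕ)) h
        simp only [Fin.coe_castLE, hklast] at h2
        have h3 := j.2
        omega
      exact hne _ hne' hj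
  have hent' : ∀ S ∈ A \ B, shannonH p (Wbar S) = (n : ℝ) * R S.card := by
    intro S hS
    have := (Finset.mem_sdiff.1 hS).1
    rw [hA, Finset.mem_filter] at this
    exact hent S this.1
  rw [Finset.sum_congr rfl hent']
  set T := Finset.Icc 1 N \ Finset.image d Finset.univ with hT
  have hDsub : Finset.image d Finset.univ ⊆ Finset.Icc 1 N := by
    intro x hx
    rw [Finset.mem_image] at hx
    obtain ⟨j, -, rfl⟩ := hx
    exact hdmem j
  have hTcard : T.card = N - k := by
    rw [hT, Finset.card_sdiff_of_subset hDsub, Finset.card_image_of_injective _ hd,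
      Finset.card_univ, Fintype.card_fin, Nat.card_Icc]
    simp
  have hbij : ∑ S ∈ A \ B, ((n : ℝ) * R S.card)
      = ∑ T' ∈ T.powerset, (n : ℝ) * R (T'.card + 1) := by
    refine Finset.sum_nbij' (fun S => S.erase (d klast)) (fun T' => insert (d klast) T')
      ?_ ?_ ?_ ?_ ?_
    · intro S hS
      obtain ⟨hsub, hkl, hne⟩ := (hmem S).1 hS
      rw [Finset.mem_powerset, hT]
      intro x hx
      obtain ⟨hxne, hxS⟩ := Finset.mem_erase.1 hx
      rw [Finset.mem_sdiff]
      refine ⟨hsub hxS, ?_⟩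
      intro hxim
      obtain ⟨j, -, rfl⟩ := Finset.mem_image.1 hxim
      by_cases hc : j = klast
      · exact hxne (by rw [hc])
      · exact hne j hc hxS
    · intro T' hT'
      rw [Finset.mem_powerset, hT] at hT'
      refine (hmem _).2 ⟨?_, Finset.mem_insert_self _ _, ?_⟩
      · intro x hx
        rcases Finset.mem_insert.1 hx with h | h
        · rw [h]; exact hdmem klast
        · exact (Finset.mem_sdiff.1 (hT' h)).1
      · intro j hj hjmem
        rcases Finset.mem_insert.1 hjmem with h | h
        · exact hj (hd h)
        · exact (Finset.mem_sdiff.1 (hT' h)).2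
            (Finset.mem_image.2 ⟨j, Finset.mem_univ _, rfl⟩)
    · intro S hS
      obtain ⟨-, hkl, -⟩ := (hmem S).1 hS
      exact Finset.insert_erase hkl
    · intro T' hT'
      rw [Finset.mem_powerset, hT] at hT'
      apply Finset.erase_insert
      intro hmem'
      exact (Finset.mem_sdiff.1 (hT' hmem')).2
        (Finset.mem_image.2 ⟨klast, Finset.mem_univ _, rfl⟩)
    · intro S hS
      obtain ⟨-, hkl, -⟩ := (hmem S).1 hS
      have hc : (S.erase (d klast)).card + 1 = S.card := by
        rw [Finset.card_erase_of_mem hkl]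
        have : 1 ≤ S.card := Finset.card_pos.2 ⟨d klast, hkl⟩
        omega
      rw [← hc]
  rw [hbij, Finset.sum_powerset_apply_card (fun c => (n : ℝ) * R (c + 1)), hTcard,
    Finset.mul_sum]
  refine Finset.sum_congr rfl fun ℓ _ => ?_
  rw [nsmul_eq_mul]
  ring
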